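/- Let ε > 0, c > 0 and λ, μ ∈ ℝ, define 𝔪 : ℝ → ℝ by 𝔪(t) = (c/ε)(t + ((λ+μ)/2)t² + (λμ/3)t³), and let J ⊆ ℝ be an open interval with 0 ∈ J such that (1 + tλ)(1 + tμ) > 0 for all t ∈ J. Let 𝔱 : 𝔪(J) → ℝ be the inverse function of the restriction of 𝔪 to J. Then the third derivative 𝔱''' is a convex function on the open interval 𝔪(J). -/

import Mathlib

noncomputable def stmt6P (l m t : ℝ) : ℝ := (1 + t * l) * (1 + t * m)
noncomputable def stmt6Pd (l m t : ℝ) : ℝ := (l + m) + 2 * (l * m) * t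

lemma stmt6_hasDerivAt_P (l m t : ℝ) : HasDerivAt (stmt6P l m) (stmt6Pd l m t) t := by
  have h1 : HasDerivAt (fun t : ℝ => 1 + t * l) l t := by
    simpa using ((hasDerivAt_id t).mul_const l).const_add 1
  have h2 : HasDerivAt (fun t : ℝ => 1 + t * m) m t := by
    simpa using ((hasDerivAt_id t).mul_const m).const_add 1
  have h := h1.mul h2
  have : HasDerivAt (stmt6P l m) (l * (1 + t * m) + (1 + t * l) * m) t := h
  convert this using 1
  unfold stmt6Pd; ring

lemma stmt6_hasDerivAt_Pd (l m t : ℝ) : HasDerivAt (stmt6Pd l m) (2 * (l * m)) t := by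
  have h := ((hasDerivAt_id t).const_mul (2 * (l * m))).const_add (l + m)
  exact h.congr_deriv (mul_one _)

lemma stmt6_div_pow {N Pf : ℝ → ℝ} {N' Pd' : ℝ} {t : ℝ}
    (hN : HasDerivAt N N' t) (hP : HasDerivAt Pf Pd' t) {k : ℕ} (hk : k ≠ 0)
    (h0 : Pf t ≠ 0) :
    HasDerivAt (fun s => N s / Pf s ^ k)
      ((N' * Pf t - (k : ℝ) * N t * Pd') / Pf t ^ (k + 1)) t := by
  obtain ⟨j, rfl⟩ := Nat.exists_eq_succ_of_ne_zero hk
  have hpow : HasDerivAt (fun s => Pf s ^ (j + 1)) (((j : ℝ) + 1) * Pf t ^ j * Pd') t := by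
    simpa using hP.fun_pow (j + 1)
  have h := hN.div hpow (pow_ne_zero _ h0)
  refine h.congr_deriv ?_
  simp only [Nat.succ_eq_add_one, Nat.cast_add, Nat.cast_one]
  field_simp
  ring

theorem stmt_6 (ε c : ℝ) (hε : 0 < ε) (hc : 0 < c) (lam mu : ℝ)
    (𝔪 : ℝ → ℝ)
    (h𝔪 : ∀ t : ℝ, 𝔪 t = (c / ε) * (t + ((lam + mu) / 2) * t ^ 2 + (lam * mu / 3) * t ^ 3))
    (a b : ℝ) (ha : a < 0) (hb : 0 < b)
    (hJ : ∀ t ∈ Set.Ioo a b, 0 < (1 + t * lam) * (1 + t * mu))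
    (𝔱 : ℝ → ℝ) (h𝔱 : Set.InvOn 𝔱 𝔪 (Set.Ioo a b) (𝔪 '' Set.Ioo a b)) :
    ConvexOn ℝ (𝔪 '' Set.Ioo a b) (iteratedDeriv 3 𝔱) := by
  have hc0 : c ≠ 0 := ne_of_gt hc
  have hε0 : ε ≠ 0 := ne_of_gt hε
  have hab : a < b := ha.trans hb
  have hJ' : ∀ t ∈ Set.Ioo a b, 0 < stmt6P lam mu t := by
    intro t ht; exact hJ t ht
  -- derivative of 𝔪
  have hm' : ∀ t : ℝ, HasDerivAt 𝔪 ((c / ε) * stmt6P lam mu t) t := by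
    intro t
    have h1 : HasDerivAt (fun t : ℝ => (c / ε) * (t + ((lam + mu) / 2) * t ^ 2 + (lam * mu / 3) * t ^ 3))
        ((c / ε) * ((1 + ((lam + mu) / 2) * (2 * t ^ 1)) + (lam * mu / 3) * (3 * t ^ 2))) t := by
      exact (((hasDerivAt_id t).add ((hasDerivAt_pow 2 t).const_mul _)).add
        ((hasDerivAt_pow 3 t).const_mul _)).const_mul _
    have h2 : HasDerivAt 𝔪
        ((c / ε) * ((1 + ((lam + mu) / 2) * (2 * t ^ 1)) + (lam * mu / 3) * (3 * t ^ 2))) t := by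
      refine h1.congr_of_eventuallyEq ?_
      filter_upwards with y using (h𝔪 y)
    convert h2 using 1
    unfold stmt6P; ring
  have hcont𝔪 : Continuous 𝔪 := by
    refine continuous_iff_continuousAt.2 fun t => (hm' t).continuousAt
  -- strict monotonicity on Icc
  have hmono : StrictMonoOn 𝔪 (Set.Icc a b) := by
    refine strictMonoOn_of_deriv_pos (convex_Icc a b) hcont𝔪.continuousOn ?_
    intro t ht
    rw [interior_Icc] at ht
    rw [(hm' t).deriv]
    exact mul_pos (div_pos hc hε) (hJ' t ht)
  -- image
  have himg : 𝔪 '' Set.Ioo a b = Set.Ioo (𝔪 a) (𝔪 b) := by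
    apply Set.Subset.antisymm
    · rintro _ ⟨x, hx, rfl⟩
      exact ⟨hmono ⟨le_refl a, le_of_lt hab⟩ ⟨le_of_lt hx.1, le_of_lt hx.2⟩ hx.1,
        hmono ⟨le_of_lt hx.1, le_of_lt hx.2⟩ ⟨le_of_lt hab, le_refl b⟩ hx.2⟩
    · exact intermediate_value_Ioo (le_of_lt hab) hcont𝔪.continuousOn
  have hSopen : IsOpen (𝔪 '' Set.Ioo a b) := by rw [himg]; exact isOpen_Ioo
  -- 𝔱 maps S into Ioo a b and is a right inverse there
  have h𝔱mem : ∀ y ∈ 𝔪 '' Set.Ioo a b, 𝔱 y ∈ Set.Ioo a b ∧ 𝔪 (𝔱 y) = y := by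
    rintro _ ⟨x, hx, rfl⟩
    rw [h𝔱.1 hx]
    exact ⟨hx, rfl⟩
  -- 𝔱 is strictly monotone on S
  have h𝔱mono : StrictMonoOn 𝔱 (𝔪 '' Set.Ioo a b) := by
    intro y1 h1 y2 h2 hlt
    by_contra hle
    push_neg at hle
    have := hmono.monotoneOn (Set.Ioo_subset_Icc_self (h𝔱mem y2 h2).1)
      (Set.Ioo_subset_Icc_self (h𝔱mem y1 h1).1) hle
    rw [(h𝔱mem y1 h1).2, (h𝔱mem y2 h2).2] at this
    exact absurd hlt (not_lt.2 this)
  have h𝔱cont : ∀ m ∈ 𝔪 '' Set.Ioo a b, ContinuousAt 𝔱 m := by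
    intro m hm
    refine h𝔱mono.continuousAt_of_image_mem_nhds (hSopen.mem_nhds hm) ?_
    refine Filter.mem_of_superset (isOpen_Ioo.mem_nhds (h𝔱mem m hm).1) ?_
    intro x hx
    exact ⟨𝔪 x, ⟨x, hx, rfl⟩, h𝔱.1 hx⟩
  -- first derivative of 𝔱
  have key1 : ∀ m ∈ 𝔪 '' Set.Ioo a b, HasDerivAt 𝔱 ((c / ε * stmt6P lam mu (𝔱 m))⁻¹) m := by
    intro m hm
    refine HasDerivAt.of_local_left_inverse (h𝔱cont m hm) (hm' (𝔱 m)) ?_ ?_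
    · exact ne_of_gt (mul_pos (div_pos hc hε) (hJ' _ (h𝔱mem m hm).1))
    · filter_upwards [hSopen.mem_nhds hm] with y hy using (h𝔱mem y hy).2
  -- generic step for higher derivatives
  have step : ∀ (F N N' : ℝ → ℝ) (k : ℕ), k ≠ 0 →
      (∀ t, HasDerivAt N (N' t) t) →
      (∀ m ∈ 𝔪 '' Set.Ioo a b, HasDerivAt F (N (𝔱 m) / stmt6P lam mu (𝔱 m) ^ k) m) →
      ∀ m ∈ 𝔪 '' Set.Ioo a b, HasDerivAt (deriv F)
        ((N' (𝔱 m) * stmt6P lam mu (𝔱 m) - (k : ℝ) * N (𝔱 m) * stmt6Pd lam mu (𝔱 m))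
            / stmt6P lam mu (𝔱 m) ^ (k + 1) * (c / ε * stmt6P lam mu (𝔱 m))⁻¹) m := by
    intro F N N' k hk hN hF m hm
    have hP0 : stmt6P lam mu (𝔱 m) ≠ 0 := ne_of_gt (hJ' _ (h𝔱mem m hm).1)
    have hq := stmt6_div_pow (hN (𝔱 m)) (stmt6_hasDerivAt_P lam mu (𝔱 m)) hk hP0
    have hcomp := hq.comp m (key1 m hm)
    refine hcomp.congr_of_eventuallyEq ?_
    filter_upwards [hSopen.mem_nhds hm] with y hy
    exact (hF y hy).deriv
  -- chain of derivatives
  have key1' : ∀ m ∈ 𝔪 '' Set.Ioo a b, HasDerivAt 𝔱 ((ε / c) / stmt6P lam mu (𝔱 m) ^ 1) m := by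
    intro m hm
    have hP0 : stmt6P lam mu (𝔱 m) ≠ 0 := ne_of_gt (hJ' _ (h𝔱mem m hm).1)
    convert key1 m hm using 1
    field_simp
  have hN1 : ∀ t : ℝ, HasDerivAt (fun _ : ℝ => ε / c) ((fun _ : ℝ => (0 : ℝ)) t) t :=
    fun t => hasDerivAt_const t _
  have h2 := step 𝔱 (fun _ => ε / c) (fun _ => 0) 1 one_ne_zero hN1 key1'
  have key2 : ∀ m ∈ 𝔪 '' Set.Ioo a b, HasDerivAt (deriv 𝔱)
      ((-(ε ^ 2 / c ^ 2) * stmt6Pd lam mu (𝔱 m)) / stmt6P lam mu (𝔱 m) ^ 3) m := by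
    intro m hm
    have hP0 : stmt6P lam mu (𝔱 m) ≠ 0 := ne_of_gt (hJ' _ (h𝔱mem m hm).1)
    convert h2 m hm using 1
    field_simp
    ring
  have hN2 : ∀ t : ℝ, HasDerivAt (fun t : ℝ => -(ε ^ 2 / c ^ 2) * stmt6Pd lam mu t)
      ((fun _ : ℝ => -(ε ^ 2 / c ^ 2) * (2 * (lam * mu))) t) t :=
    fun t => (stmt6_hasDerivAt_Pd lam mu t).const_mul _
  have h3 := step (deriv 𝔱) _ _ 3 three_ne_zero hN2 key2
  have key3 : ∀ m ∈ 𝔪 '' Set.Ioo a b, HasDerivAt (deriv (deriv 𝔱))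
      ((ε ^ 3 / c ^ 3) * (3 * stmt6Pd lam mu (𝔱 m) ^ 2 - 2 * (lam * mu) * stmt6P lam mu (𝔱 m))
        / stmt6P lam mu (𝔱 m) ^ 5) m := by
    intro m hm
    have hP0 : stmt6P lam mu (𝔱 m) ≠ 0 := ne_of_gt (hJ' _ (h𝔱mem m hm).1)
    convert h3 m hm using 1
    field_simp
    ring
  have hN3 : ∀ t : ℝ, HasDerivAt
      (fun t : ℝ => (ε ^ 3 / c ^ 3) * (3 * stmt6Pd lam mu t ^ 2 - 2 * (lam * mu) * stmt6P lam mu t))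
      ((fun t : ℝ => (ε ^ 3 / c ^ 3) * (10 * (lam * mu) * stmt6Pd lam mu t)) t) t := by
    intro t
    have h := ((((stmt6_hasDerivAt_Pd lam mu t).fun_pow 2).const_mul 3).sub
      ((stmt6_hasDerivAt_P lam mu t).const_mul (2 * (lam * mu)))).const_mul (ε ^ 3 / c ^ 3)
    refine h.congr_deriv ?_
    ring
  have h4 := step (deriv (deriv 𝔱)) _ _ 5 (by norm_num) hN3 key3
  have key4 : ∀ m ∈ 𝔪 '' Set.Ioo a b, HasDerivAt (deriv (deriv (deriv 𝔱)))
      ((ε ^ 4 / c ^ 4) * (5 * stmt6Pd lam mu (𝔱 m) *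
          (4 * (lam * mu) * stmt6P lam mu (𝔱 m) - 3 * stmt6Pd lam mu (𝔱 m) ^ 2))
        / stmt6P lam mu (𝔱 m) ^ 7) m := by
    intro m hm
    have hP0 : stmt6P lam mu (𝔱 m) ≠ 0 := ne_of_gt (hJ' _ (h𝔱mem m hm).1)
    convert h4 m hm using 1
    field_simp
    ring
  have hN4 : ∀ t : ℝ, HasDerivAt
      (fun t : ℝ => (ε ^ 4 / c ^ 4) * (5 * stmt6Pd lam mu t *
          (4 * (lam * mu) * stmt6P lam mu t - 3 * stmt6Pd lam mu t ^ 2)))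
      ((fun t : ℝ => (ε ^ 4 / c ^ 4) * (40 * (lam * mu) ^ 2 * stmt6P lam mu t
          - 70 * (lam * mu) * stmt6Pd lam mu t ^ 2)) t) t := by
    intro t
    have h := ((((stmt6_hasDerivAt_Pd lam mu t).const_mul 5).fun_mul
      (((stmt6_hasDerivAt_P lam mu t).const_mul (4 * (lam * mu))).fun_sub
        (((stmt6_hasDerivAt_Pd lam mu t).fun_pow 2).const_mul 3))).const_mul (ε ^ 4 / c ^ 4))
    refine h.congr_deriv ?_
    unfold stmt6P stmt6Pd
    ring
  have h5 := step (deriv (deriv (deriv 𝔱))) _ _ 7 (by norm_num) hN4 key4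
  -- rewrite iteratedDeriv
  have hiter : iteratedDeriv 3 𝔱 = deriv (deriv (deriv 𝔱)) := by
    rw [show (3 : ℕ) = 2 + 1 from rfl, iteratedDeriv_succ,
      show (2 : ℕ) = 1 + 1 from rfl, iteratedDeriv_succ,
      show (1 : ℕ) = 0 + 1 from rfl, iteratedDeriv_succ, iteratedDeriv_zero]
  rw [hiter]
  refine convexOn_of_deriv2_nonneg' ?_ ?_ ?_ ?_
  · rw [himg]; exact convex_Ioo _ _
  · intro m hm
    exact (key4 m hm).differentiableAt.differentiableWithinAt
  · intro m hm
    exact (h5 m hm).differentiableAt.differentiableWithinAt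
  · intro m hm
    have hd2 : deriv^[2] (deriv (deriv (deriv 𝔱))) m = deriv (deriv (deriv (deriv (deriv 𝔱)))) m := by
      simp [Function.iterate_succ_apply', Function.iterate_zero_apply]
    rw [hd2, (h5 m hm).deriv]
    have hP0 : 0 < stmt6P lam mu (𝔱 m) := hJ' _ (h𝔱mem m hm).1
    have hid : 4 * (lam * mu) * stmt6P lam mu (𝔱 m) = stmt6Pd lam mu (𝔱 m) ^ 2 - (lam - mu) ^ 2 := by
      unfold stmt6P stmt6Pd; ring
    have hid2 : (4 * (lam * mu) * stmt6P lam mu (𝔱 m)) ^ 2 =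
        (stmt6Pd lam mu (𝔱 m) ^ 2 - (lam - mu) ^ 2) ^ 2 := by rw [hid]
    refine mul_nonneg (div_nonneg ?_ (by positivity)) ?_
    · have hε4 : (0:ℝ) < ε ^ 4 / c ^ 4 := by positivity
      have hkey : 0 ≤ 40 * (lam * mu) ^ 2 * stmt6P lam mu (𝔱 m) * stmt6P lam mu (𝔱 m)
          - 70 * (lam * mu) * stmt6Pd lam mu (𝔱 m) ^ 2 * stmt6P lam mu (𝔱 m)
          - 7 * (5 * stmt6Pd lam mu (𝔱 m) * (4 * (lam * mu) * stmt6P lam mu (𝔱 m)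
              - 3 * stmt6Pd lam mu (𝔱 m) ^ 2)) * stmt6Pd lam mu (𝔱 m) := by
        nlinarith [hid, hid2, sq_nonneg (stmt6Pd lam mu (𝔱 m) ^ 2 - (lam - mu) ^ 2),
          sq_nonneg (stmt6Pd lam mu (𝔱 m) ^ 2),
          mul_nonneg (sq_nonneg (stmt6Pd lam mu (𝔱 m))) (sq_nonneg (lam - mu))]
      nlinarith [mul_nonneg (le_of_lt hε4) hkey]
    · exact inv_nonneg.2 (le_of_lt (mul_pos (div_pos hc hε) hP0))
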